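/- Let Δ be a matroid on vertex set V, v ∈ V a vertex that is not a cone point (i.e., some facet omits v), and let J(Δ) = ⋂_{F facet of Δ} (x_i : i ∈ F) be the cover ideal in k[x_i : i ∈ V]. Then the h-vectors satisfy h^Δ_i = h^{Δ\v}_{i-1} + h^{link_Δ(v)}_i for all i, where h^Δ denotes the h-vector of S/J(Δ). -/

import Mathlib

open scoped Classical

/-- The Hilbert function of the graded quotient `S/I`, `S = k[x_v : v ∈ V]`:
the `k`-dimension of the image of the degree-`j` homogeneous component in `S/I`. -/
noncomputable def gradedHF (k : Type*) [Field k] {V : Type*} [Fintype V]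
    (I : Ideal (MvPolynomial V k)) (j : ℕ) : ℕ :=
  Module.finrank k ((MvPolynomial.homogeneousSubmodule V k j).map
    (Ideal.Quotient.mkₐ k I).toLinearMap)

/-- The h-vector of `S/I` (of Krull dimension `d`): the `i`-th coefficient of the
numerator of the Hilbert series written with denominator `(1-z)^d`, i.e. of
`HS_{S/I}(z)·(1-z)^d`. -/
noncomputable def hVec (k : Type*) [Field k] {V : Type*} [Fintype V]
    (I : Ideal (MvPolynomial V k)) (d i : ℕ) : ℤ :=
  PowerSeries.coeff (R := ℤ) i
    ((PowerSeries.mk fun j => (gradedHF k I j : ℤ)) * (1 - PowerSeries.X) ^ d)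

/-- The facets (maximal faces) of the simplicial complex whose faces are the `F` with
`P F`. -/
noncomputable def facets {V : Type*} [Fintype V] (P : Finset V → Prop) :
    Finset (Finset V) :=
  Finset.univ.filter fun B => P B ∧ ∀ F : Finset V, P F → B ⊆ F → B = F

/-- The cover ideal `J(Δ) = ⋂_{F facet} (x_i : i ∈ F)` of a complex with facet set `Fs`. -/
noncomputable def coverIdeal (k : Type*) [Field k] {V : Type*} [Fintype V]
    (Fs : Finset (Finset V)) : Ideal (MvPolynomial V k) :=
  ⨅ B ∈ Fs, Ideal.span ((fun v => (MvPolynomial.X v : MvPolynomial V k)) '' (B : Set V))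



set_option linter.unusedSectionVars false
set_option linter.unusedVariables false
set_option linter.unusedTactic false
set_option maxHeartbeats 1000000


namespace HvecAux

open Finset MvPolynomial

variable {V : Type*} [Fintype V] [DecidableEq V]

set_option linter.unusedSectionVars false

lemma mem_facets_iff {P : Finset V → Prop} {B : Finset V} :
    B ∈ facets P ↔ P B ∧ ∀ F : Finset V, P F → B ⊆ F → B = F := by
  simp [facets]

lemma exists_facet {P : Finset V → Prop} (F : Finset V) (hF : P F) :
    ∃ B ∈ facets P, F ⊆ B := by
  have key : ∀ n (F : Finset V), Fintype.card V - F.card ≤ n → P F →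
      ∃ B ∈ facets P, F ⊆ B := by
    intro n
    induction n with
    | zero =>
      intro F hle hF
      refine ⟨F, mem_facets_iff.2 ⟨hF, fun G hG hFG => ?_⟩, subset_rfl⟩
      by_contra hne
      have h1 : F ⊂ G := Finset.ssubset_iff_subset_ne.2 ⟨hFG, hne⟩
      have h2 : F.card < G.card := card_lt_card h1
      have h3 : G.card ≤ Fintype.card V := card_le_card (subset_univ G)
      omega
    | succ n ih =>
      intro F hle hF
      by_cases hmax : ∀ G : Finset V, P G → F ⊆ G → F = G
      · exact ⟨F, mem_facets_iff.2 ⟨hF, hmax⟩, subset_rfl⟩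
      · push_neg at hmax
        obtain ⟨G, hG, hFG, hne⟩ := hmax
        have h2 : F.card < G.card := card_lt_card (Finset.ssubset_iff_subset_ne.2 ⟨hFG, hne⟩)
        obtain ⟨B, hB, hGB⟩ := ih G (by omega) hG
        exact ⟨B, hB, hFG.trans hGB⟩
  exact key _ F le_rfl hF

section Matroid

variable {Indep : Finset V → Prop}
  (hdown : ∀ F G : Finset V, G ⊆ F → Indep F → Indep G)
  (hexch : ∀ F G : Finset V, Indep F → Indep G → G.card < F.card →
      ∃ u ∈ F, u ∉ G ∧ Indep (insert u G))
  {r : ℕ} (hrank : ∀ B ∈ facets Indep, B.card = r)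

include hrank in
lemma card_le_rank (F : Finset V) (hF : Indep F) : F.card ≤ r := by
  obtain ⟨B, hB, hFB⟩ := exists_facet F hF
  exact (hrank B hB) ▸ card_le_card hFB

include hrank in
lemma facet_of_card (F : Finset V) (hF : Indep F) (hcard : F.card = r) :
    F ∈ facets Indep := by
  obtain ⟨B, hB, hFB⟩ := exists_facet F hF
  have : F = B := eq_of_subset_of_card_le hFB (by rw [hcard, hrank B hB])
  exact this ▸ hB

include hexch hrank in
lemma grow (w : V) (B : Finset V) (hB : Indep B) (hBcard : B.card = r) :
    ∀ n (G : Finset V), Indep G → G ⊆ insert w B → r - G.card ≤ n →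
      ∃ C : Finset V, Indep C ∧ C.card = r ∧ G ⊆ C ∧ C ⊆ insert w B := by
  intro n
  induction n with
  | zero =>
    intro G hG hGsub hle
    have := card_le_rank hrank G hG
    exact ⟨G, hG, by omega, subset_rfl, hGsub⟩
  | succ n ih =>
    intro G hG hGsub hle
    by_cases hcard : G.card = r
    · exact ⟨G, hG, hcard, subset_rfl, hGsub⟩
    · have hlt : G.card < B.card := by
        have := card_le_rank hrank G hG; omega
      obtain ⟨u, huB, huG, hind⟩ := hexch B G hB hG hlt
      obtain ⟨C, h1, h2, h3, h4⟩ := ih (insert u G) hind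
        (insert_subset (mem_insert_of_mem huB) hGsub)
        (by rw [card_insert_of_notMem huG]; omega)
      exact ⟨C, h1, h2, (subset_insert u G).trans h3, h4⟩

include hexch hrank in
lemma facets_del (v : V) (hnotcone : ∃ B ∈ facets Indep, v ∉ B) (B : Finset V) :
    B ∈ facets (fun F => v ∉ F ∧ Indep F) ↔ B ∈ facets Indep ∧ v ∉ B := by
  constructor
  · intro h
    obtain ⟨⟨hv, hBI⟩, hmax⟩ := mem_facets_iff.1 h
    refine ⟨?_, hv⟩
    apply facet_of_card hrank B hBI
    by_contra hne
    have hle := card_le_rank hrank B hBI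
    obtain ⟨B0, hB0, hvB0⟩ := hnotcone
    obtain ⟨hB0I, -⟩ := mem_facets_iff.1 hB0
    have hlt : B.card < B0.card := by rw [hrank B0 hB0]; omega
    obtain ⟨u, huB0, huB, hind⟩ := hexch B0 B hB0I hBI hlt
    have huv : u ≠ v := fun h => hvB0 (h ▸ huB0)
    have : B = insert u B := hmax (insert u B)
      ⟨by simp [Finset.mem_insert, hv, huv.symm], hind⟩ (subset_insert u B)
    exact huB (this ▸ mem_insert_self u B)
  · rintro ⟨hB, hv⟩
    obtain ⟨hBI, hmax⟩ := mem_facets_iff.1 hB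
    exact mem_facets_iff.2 ⟨⟨hv, hBI⟩, fun G hG hBG => hmax G hG.2 hBG⟩

include hexch hrank in
lemma facets_link (v : V) (hnotcone : ∃ B ∈ facets Indep, v ∉ B) (F : Finset V) :
    F ∈ facets (fun F => v ∉ F ∧ Indep (insert v F)) ↔
      v ∉ F ∧ insert v F ∈ facets Indep := by
  obtain ⟨B0, hB0, hvB0⟩ := hnotcone
  obtain ⟨hB0I, -⟩ := mem_facets_iff.1 hB0
  constructor
  · intro h
    obtain ⟨⟨hv, hI⟩, hmax⟩ := mem_facets_iff.1 h
    refine ⟨hv, ?_⟩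
    apply facet_of_card hrank _ hI
    by_contra hne
    have hle := card_le_rank hrank _ hI
    have hlt : (insert v F).card < B0.card := by rw [hrank B0 hB0]; omega
    obtain ⟨u, huB0, huF, hind⟩ := hexch B0 (insert v F) hB0I hI hlt
    have huv : u ≠ v := fun h => huF (by simp [h])
    have huF' : u ∉ F := fun h => huF (mem_insert_of_mem h)
    have hcomm : insert v (insert u F) = insert u (insert v F) := Finset.insert_comm v u F
    have : F = insert u F := hmax (insert u F)
      ⟨by simp [Finset.mem_insert, hv, huv.symm], hcomm ▸ hind⟩ (subset_insert u F)
    exact huF' (this ▸ mem_insert_self u F)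
  · rintro ⟨hv, hfac⟩
    obtain ⟨hI, hmax⟩ := mem_facets_iff.1 hfac
    refine mem_facets_iff.2 ⟨⟨hv, hI⟩, fun G hG hFG => ?_⟩
    have h1 : insert v F = insert v G :=
      hmax (insert v G) hG.2 (insert_subset_insert v hFG)
    have := congrArg (fun s => Finset.erase s v) h1
    simpa [Finset.erase_insert hv, Finset.erase_insert hG.1] using this

include hexch hrank in
lemma key_equiv (v : V) (hvert : Indep {v})
    (hnotcone : ∃ B ∈ facets Indep, v ∉ B) (m : V → ℕ) (hmv : m v = 0) :
    (∃ B ∈ facets Indep, ∀ i ∈ B, m i = 0) ↔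
      (∃ F ∈ facets (fun F => v ∉ F ∧ Indep (insert v F)), ∀ i ∈ F, m i = 0) := by
  constructor
  · rintro ⟨B, hB, hzero⟩
    obtain ⟨hBI, -⟩ := mem_facets_iff.1 hB
    by_cases hvB : v ∈ B
    · refine ⟨B.erase v, ?_, fun i hi => hzero i (erase_subset v B hi)⟩
      rw [facets_link hexch hrank v hnotcone]
      exact ⟨notMem_erase v B, by rwa [insert_erase hvB]⟩
    · obtain ⟨C, hCI, hCcard, hvC, hCsub⟩ := grow hexch hrank v B hBI (hrank B hB) r
        {v} hvert (by simp [Finset.singleton_subset_iff]) (by omega)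
      have hvC' : v ∈ C := hvC (mem_singleton_self v)
      refine ⟨C.erase v, ?_, fun i hi => ?_⟩
      · rw [facets_link hexch hrank v hnotcone]
        refine ⟨notMem_erase v C, ?_⟩
        rw [insert_erase hvC']
        exact facet_of_card hrank C hCI hCcard
      · have hiC : i ∈ C := erase_subset v C hi
        have hiv : i ≠ v := ne_of_mem_erase hi
        have : i ∈ insert v B := hCsub hiC
        have hiB : i ∈ B := by
          rcases mem_insert.1 this with h | h
          · exact absurd h hiv
          · exact h
        exact hzero i hiB
  · rintro ⟨F, hF, hzero⟩
    rw [facets_link hexch hrank v hnotcone] at hF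
    refine ⟨insert v F, hF.2, fun i hi => ?_⟩
    rcases mem_insert.1 hi with h | h
    · exact h ▸ hmv
    · exact hzero i h

end Matroid


noncomputable def cnt (Fs : Finset (Finset V)) (j : ℕ) : ℕ :=
  ((Finset.univ.finsuppAntidiag j).filter
    (fun m : V →₀ ℕ => ∃ B ∈ Fs, ∀ i ∈ B, m i = 0)).card

lemma cnt_zero {Fs : Finset (Finset V)} (h : Fs.Nonempty) : cnt Fs 0 = 1 := by
  obtain ⟨B, hB⟩ := h
  have h1 : (Finset.univ.finsuppAntidiag (0:ℕ) : Finset (V →₀ ℕ)) = {0} := by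
    ext f
    simp only [mem_finsuppAntidiag, Finset.mem_singleton]
    constructor
    · rintro ⟨hsum, -⟩
      ext i
      have := Finset.sum_eq_zero_iff.1 hsum i (Finset.mem_univ i)
      simpa using this
    · rintro rfl; simp
  rw [cnt, h1]
  rw [Finset.filter_singleton, if_pos ⟨B, hB, fun i _ => rfl⟩]
  simp

lemma sum_univ_eq_degree (m : V →₀ ℕ) : ∑ i, m i = m.sum (fun _ n => n) := by
  rw [Finsupp.sum]
  exact (Finset.sum_subset (Finset.subset_univ _) (by
    intro x _ hx
    simpa using Finsupp.notMem_support_iff.1 hx)).symm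

lemma mem_antidiag_iff {m : V →₀ ℕ} {j : ℕ} :
    m ∈ Finset.univ.finsuppAntidiag j ↔ ∑ i, m i = j := by
  simp [mem_finsuppAntidiag]

lemma cnt_bij {Fs : Finset (Finset V)} {v : V} (hv : ∀ B ∈ Fs, v ∉ B) (j : ℕ) :
    (((Finset.univ.finsuppAntidiag (j+1)).filter
      (fun m : V →₀ ℕ => (∃ B ∈ Fs, ∀ i ∈ B, m i = 0) ∧ m v ≠ 0)).card) = cnt Fs j := by
  rw [cnt]
  apply Finset.card_nbij' (fun m => m - Finsupp.single v 1) (fun m => m + Finsupp.single v 1)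
  · intro m hm
    simp only [Finset.mem_coe, Finset.mem_filter] at hm ⊢
    obtain ⟨hmem, ⟨B, hB, hzero⟩, hmv⟩ := hm
    rw [mem_antidiag_iff] at hmem
    have happ : ∀ i : V, ((m - Finsupp.single v 1 : V →₀ ℕ)) i = m i - (if i = v then 1 else 0) := by
      intro i
      rw [Finsupp.tsub_apply, Finsupp.single_apply]
      simp [eq_comm]
    refine ⟨mem_antidiag_iff.2 ?_, B, hB, fun i hi => ?_⟩
    · have e1 : ∀ i ∈ Finset.univ.erase v, ((m - Finsupp.single v 1 : V →₀ ℕ)) i = m i := by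
        intro i hi
        rw [happ i, if_neg (Finset.ne_of_mem_erase hi)]
        omega
      have h2 : m v + (Finset.univ.erase v).sum ⇑m = j + 1 := by
        rw [Finset.add_sum_erase _ _ (Finset.mem_univ v)]; exact hmem
      have h3 : ((m - Finsupp.single v 1 : V →₀ ℕ)) v = m v - 1 := by
        rw [happ v, if_pos rfl]
      rw [← Finset.add_sum_erase _ _ (Finset.mem_univ v), Finset.sum_congr rfl e1, h3]
      omega
    · rw [happ i, hzero i hi]
      simp
  · intro m hm
    simp only [Finset.mem_coe, Finset.mem_filter] at hm ⊢
    obtain ⟨hmem, B, hB, hzero⟩ := hm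
    rw [mem_antidiag_iff] at hmem
    have happ : ∀ i : V, ((m + Finsupp.single v 1 : V →₀ ℕ)) i = m i + (if i = v then 1 else 0) := by
      intro i
      rw [Finsupp.add_apply, Finsupp.single_apply]
      simp [eq_comm]
    refine ⟨mem_antidiag_iff.2 ?_, ⟨B, hB, fun i hi => ?_⟩, ?_⟩
    · have : ∑ i, ((m + Finsupp.single v 1 : V →₀ ℕ)) i
          = ∑ i, (m i + if i = v then 1 else 0) := Finset.sum_congr rfl (fun i _ => happ i)
      rw [this, Finset.sum_add_distrib, hmem, Finset.sum_ite_eq' Finset.univ v (fun _ => 1)]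
      simp [Nat.add_comm]
    · rw [happ i, hzero i hi]
      have : i ≠ v := fun h => (hv B hB) (h ▸ hi)
      simp [this]
    · rw [happ v]
      simp
  · intro m hm
    simp only [Finset.mem_coe, Finset.mem_filter] at hm
    obtain ⟨-, -, hmv⟩ := hm
    ext i
    show ((m - Finsupp.single v 1 + Finsupp.single v 1 : V →₀ ℕ)) i = m i
    rw [Finsupp.add_apply, Finsupp.tsub_apply]
    rcases eq_or_ne i v with rfl | h
    · simp only [Finsupp.single_eq_same]
      omega
    · rw [Finsupp.single_eq_of_ne (by simpa [eq_comm] using h)]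
      omega
  · intro m hm
    ext i
    show ((m + Finsupp.single v 1 - Finsupp.single v 1 : V →₀ ℕ)) i = m i
    rw [Finsupp.tsub_apply, Finsupp.add_apply]
    rcases eq_or_ne i v with rfl | h
    · simp only [Finsupp.single_eq_same]
      omega
    · rw [Finsupp.single_eq_of_ne (by simpa [eq_comm] using h)]
      omega

lemma cnt_split (Fs : Finset (Finset V)) (v : V) (j : ℕ) :
    cnt Fs j =
      ((Finset.univ.finsuppAntidiag j).filter
        (fun m : V →₀ ℕ => (∃ B ∈ Fs, ∀ i ∈ B, m i = 0) ∧ m v = 0)).card +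
      ((Finset.univ.finsuppAntidiag j).filter
        (fun m : V →₀ ℕ => (∃ B ∈ Fs, ∀ i ∈ B, m i = 0) ∧ m v ≠ 0)).card := by
  rw [cnt]
  rw [← Finset.filter_filter, ← Finset.filter_filter]
  exact (Finset.card_filter_add_card_filter_not (fun m : V →₀ ℕ => m v = 0)).symm


lemma degree_eq_sum_univ (m : V →₀ ℕ) : m.degree = ∑ i, m i := by
  rw [Finsupp.degree]
  exact Finset.sum_subset (Finset.subset_univ _) (by
    intro x _ hx
    simpa using Finsupp.notMem_support_iff.1 hx)
lemma mem_coverIdeal {k : Type*} [Field k] {Fs : Finset (Finset V)}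
    {p : MvPolynomial V k} :
    p ∈ coverIdeal k Fs ↔ ∀ m ∈ p.support, ∀ B ∈ Fs, ∃ i ∈ B, (m : V →₀ ℕ) i ≠ 0 := by
  simp only [coverIdeal, Ideal.mem_iInf]
  have : ∀ B : Finset V,
      (p ∈ Ideal.span ((fun v => (MvPolynomial.X v : MvPolynomial V k)) '' (B : Set V))
        ↔ ∀ m ∈ p.support, ∃ i ∈ (B : Set V), (m : V →₀ ℕ) i ≠ 0) := by
    intro B
    exact MvPolynomial.mem_ideal_span_X_image
  constructor
  · intro h m hm B hB
    obtain ⟨i, hi, hne⟩ := (this B).1 (h B hB) m hm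
    exact ⟨i, hi, hne⟩
  · intro h B hB
    exact (this B).2 fun m hm => (h m hm B hB).imp (fun i hi => hi)

lemma monomial_mem_coverIdeal {k : Type*} [Field k] {Fs : Finset (Finset V)}
    {m : V →₀ ℕ} (c : k) (h : ∀ B ∈ Fs, ∃ i ∈ B, m i ≠ 0) :
    (monomial m c : MvPolynomial V k) ∈ coverIdeal k Fs := by
  rw [mem_coverIdeal]
  intro m' hm'
  rw [MvPolynomial.support_monomial] at hm'
  split at hm'
  · simp at hm'
  · rw [Finset.mem_singleton] at hm'
    subst hm'
    exact h

lemma gradedHF_coverIdeal (k : Type*) [Field k] (Fs : Finset (Finset V)) (j : ℕ) :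
    gradedHF k (coverIdeal k Fs) j = cnt Fs j := by
  classical
  set J := coverIdeal k Fs with hJ
  set q := (Ideal.Quotient.mkₐ k J).toLinearMap with hq
  set D := ((Finset.univ.finsuppAntidiag j).filter
    (fun m : V →₀ ℕ => ∃ B ∈ Fs, ∀ i ∈ B, m i = 0)) with hD
  set b : ↥(D : Finset (V →₀ ℕ)) → (MvPolynomial V k ⧸ J) :=
    fun m => q (monomial m.1 1) with hb
  have hqz : ∀ p : MvPolynomial V k, q p = 0 ↔ p ∈ J := by
    intro p
    rw [hq]
    show Ideal.Quotient.mkₐ k J p = 0 ↔ p ∈ J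
    rw [Ideal.Quotient.mkₐ_eq_mk, Ideal.Quotient.eq_zero_iff_mem]
  -- linear independence
  have hli : LinearIndependent k b := by
    rw [linearIndependent_iff']
    intro s g hsum i₀ hi₀
    by_contra hne
    have hsum' : q (∑ i ∈ s, monomial i.1 (g i)) = 0 := by
      rw [map_sum]
      rw [← hsum]
      apply Finset.sum_congr rfl
      intro i _
      rw [hb]
      show q (monomial i.1 (g i)) = g i • q (monomial i.1 1)
      rw [← map_smul, MvPolynomial.smul_monomial, smul_eq_mul, mul_one]
    rw [hqz] at hsum'
    rw [mem_coverIdeal] at hsum'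
    have hcoeff : coeff i₀.1 (∑ i ∈ s, monomial i.1 (g i)) = g i₀ := by
      rw [MvPolynomial.coeff_sum]
      rw [Finset.sum_eq_single i₀]
      · rw [MvPolynomial.coeff_monomial, if_pos rfl]
      · intro i hi hnei
        rw [MvPolynomial.coeff_monomial, if_neg]
        intro h
        exact hnei (Subtype.ext h)
      · intro h
        exact absurd hi₀ h
    have hmem : i₀.1 ∈ (∑ i ∈ s, monomial i.1 (g i) : MvPolynomial V k).support := by
      rw [MvPolynomial.mem_support_iff, hcoeff]
      exact hne
    obtain ⟨hant, B, hB, hzero⟩ := Finset.mem_filter.1 i₀.2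
    obtain ⟨i, hiB, hine⟩ := hsum' i₀.1 hmem B hB
    exact hine (hzero i hiB)
  -- span
  have hspan : (MvPolynomial.homogeneousSubmodule V k j).map q
      = Submodule.span k (Set.range b) := by
    apply le_antisymm
    · rintro x hx
      obtain ⟨p, hp, rfl⟩ := Submodule.mem_map.1 hx
      rw [MvPolynomial.mem_homogeneousSubmodule] at hp
      have hps : p = ∑ m ∈ p.support, monomial m (coeff m p) := MvPolynomial.as_sum p
      rw [show q p = q (∑ m ∈ p.support, monomial m (coeff m p)) by rw [← hps], map_sum]
      apply Submodule.sum_mem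
      intro m hm
      have hdeg : ∑ i, m i = j := by
        rw [← degree_eq_sum_univ, Finsupp.degree_eq_weight_one]
        exact hp (MvPolynomial.mem_support_iff.1 hm)
      by_cases hst : ∃ B ∈ Fs, ∀ i ∈ B, m i = 0
      · have hmD : m ∈ D := Finset.mem_filter.2 ⟨mem_antidiag_iff.2 hdeg, hst⟩
        have : q (monomial m (coeff m p)) = coeff m p • b ⟨m, hmD⟩ := by
          rw [hb]
          show q (monomial m (coeff m p)) = coeff m p • q (monomial m 1)
          rw [← map_smul, MvPolynomial.smul_monomial, smul_eq_mul, mul_one]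
        rw [this]
        exact Submodule.smul_mem _ _ (Submodule.subset_span ⟨⟨m, hmD⟩, rfl⟩)
      · push_neg at hst
        have : q (monomial m (coeff m p)) = 0 := by
          rw [hqz]
          exact monomial_mem_coverIdeal _ hst
        rw [this]
        exact Submodule.zero_mem _
    · rw [Submodule.span_le]
      rintro x ⟨m, rfl⟩
      obtain ⟨hant, -⟩ := Finset.mem_filter.1 m.2
      refine Submodule.mem_map.2 ⟨monomial m.1 1, ?_, rfl⟩
      rw [MvPolynomial.mem_homogeneousSubmodule]
      apply MvPolynomial.isHomogeneous_monomial
      rw [degree_eq_sum_univ]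
      exact mem_antidiag_iff.1 hant
  rw [gradedHF, hspan]
  rw [finrank_span_eq_card hli]
  rw [cnt]
  exact Fintype.card_coe D


end HvecAux

/-- Let `Δ` be a matroid on the vertex set `V` (given by its faces/independent sets, all of
whose facets have cardinality `r`, every vertex being a vertex of `Δ`), and let `v` be a
vertex which is not a cone point. Then the h-vectors of the cover ideals (the quotient
`S/J(Δ)` having Krull dimension `|V| - r`, and similarly for the deletion `Δ \ v` and the
link `link_Δ(v)`, of ranks `r` and `r-1`) satisfy
`h^Δ_i = h^{Δ\v}_{i-1} + h^{link_Δ(v)}_i` for all `i`. -/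
theorem hvec_matroid_recursion (k : Type*) [Field k] (V : Type*) [Fintype V]
    [DecidableEq V] (Indep : Finset V → Prop)
    (hempty : Indep ∅)
    (hdown : ∀ F G : Finset V, G ⊆ F → Indep F → Indep G)
    (hexch : ∀ F G : Finset V, Indep F → Indep G → G.card < F.card →
      ∃ u ∈ F, u ∉ G ∧ Indep (insert u G))
    (hvert : ∀ u : V, Indep {u})
    (r : ℕ) (hrank : ∀ B ∈ facets Indep, B.card = r)
    (v : V) (hnotcone : ∃ B ∈ facets Indep, v ∉ B) :
    ∀ i : ℕ,
      hVec k (coverIdeal k (facets Indep)) (Fintype.card V - r) i =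
        (if i = 0 then 0 else
          hVec k (coverIdeal k (facets fun F => v ∉ F ∧ Indep F))
            (Fintype.card V - r) (i - 1)) +
          hVec k (coverIdeal k (facets fun F => v ∉ F ∧ Indep (insert v F)))
            (Fintype.card V - (r - 1)) i := by
  classical
  intro i
  -- basic facts
  obtain ⟨B0, hB0, hvB0⟩ := hnotcone
  have hnc : ∃ B ∈ facets Indep, v ∉ B := ⟨B0, hB0, hvB0⟩
  have hr1 : 1 ≤ r := by
    have := HvecAux.card_le_rank hrank {v} (hvert v)
    simpa using this
  have hrn : r ≤ Fintype.card V := by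
    rw [← hrank B0 hB0]
    exact Finset.card_le_card (Finset.subset_univ _)
  have hΔne : (facets Indep).Nonempty := ⟨B0, hB0⟩
  have hLprop : v ∉ (∅ : Finset V) ∧ Indep (insert v ∅) :=
    ⟨Finset.notMem_empty v, by simpa using hvert v⟩
  obtain ⟨F0, hF0, -⟩ := HvecAux.exists_facet (P := fun F => v ∉ F ∧ Indep (insert v F)) ∅ hLprop
  have hLne : (facets fun F => v ∉ F ∧ Indep (insert v F)).Nonempty := ⟨F0, hF0⟩
  have hDavoid : ∀ B ∈ facets (fun F => v ∉ F ∧ Indep F), v ∉ B :=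
    fun B hB => ((HvecAux.facets_del hexch hrank v hnc B).1 hB).2
  have hLavoid : ∀ F ∈ facets (fun F => v ∉ F ∧ Indep (insert v F)), v ∉ F :=
    fun F hF => ((HvecAux.facets_link hexch hrank v hnc F).1 hF).1
  -- counting identities
  have count0 : HvecAux.cnt (facets Indep) 0
      = HvecAux.cnt (facets fun F => v ∉ F ∧ Indep (insert v F)) 0 := by
    rw [HvecAux.cnt_zero hΔne, HvecAux.cnt_zero hLne]
  have countS : ∀ j : ℕ,
      HvecAux.cnt (facets Indep) (j+1) + HvecAux.cnt (facets fun F => v ∉ F ∧ Indep (insert v F)) j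
      = HvecAux.cnt (facets fun F => v ∉ F ∧ Indep F) j
        + HvecAux.cnt (facets fun F => v ∉ F ∧ Indep (insert v F)) (j+1) := by
    intro j
    have hA0 : ((Finset.univ.finsuppAntidiag (j+1)).filter
        (fun m : V →₀ ℕ => (∃ B ∈ facets Indep, ∀ i ∈ B, m i = 0) ∧ m v = 0))
      = ((Finset.univ.finsuppAntidiag (j+1)).filter
        (fun m : V →₀ ℕ =>
          (∃ F ∈ facets (fun F => v ∉ F ∧ Indep (insert v F)), ∀ i ∈ F, m i = 0)
            ∧ m v = 0)) := by
      apply Finset.filter_congr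
      intro m _
      constructor
      · rintro ⟨h1, h2⟩
        exact ⟨(HvecAux.key_equiv hexch hrank v (hvert v) hnc (⇑m) h2).1 h1, h2⟩
      · rintro ⟨h1, h2⟩
        exact ⟨(HvecAux.key_equiv hexch hrank v (hvert v) hnc (⇑m) h2).2 h1, h2⟩
    have hA1 : ((Finset.univ.finsuppAntidiag (j+1)).filter
        (fun m : V →₀ ℕ => (∃ B ∈ facets Indep, ∀ i ∈ B, m i = 0) ∧ m v ≠ 0))
      = ((Finset.univ.finsuppAntidiag (j+1)).filter
        (fun m : V →₀ ℕ =>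
          (∃ B ∈ facets (fun F => v ∉ F ∧ Indep F), ∀ i ∈ B, m i = 0) ∧ m v ≠ 0)) := by
      apply Finset.filter_congr
      intro m _
      constructor
      · rintro ⟨⟨B, hB, hzero⟩, h2⟩
        have hvB : v ∉ B := fun hv => h2 (hzero v hv)
        exact ⟨⟨B, (HvecAux.facets_del hexch hrank v hnc B).2 ⟨hB, hvB⟩, hzero⟩, h2⟩
      · rintro ⟨⟨B, hB, hzero⟩, h2⟩
        exact ⟨⟨B, ((HvecAux.facets_del hexch hrank v hnc B).1 hB).1, hzero⟩, h2⟩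
    have e1 := HvecAux.cnt_split (V := V) (facets Indep) v (j+1)
    have e2 := HvecAux.cnt_split (V := V) (facets fun F => v ∉ F ∧ Indep (insert v F)) v (j+1)
    rw [hA0, hA1] at e1
    rw [HvecAux.cnt_bij hDavoid j] at e1
    rw [HvecAux.cnt_bij hLavoid j] at e2
    omega
  -- power series part
  have hgr : ∀ Fs : Finset (Finset V),
      (PowerSeries.mk fun j => ((gradedHF k (coverIdeal k Fs) j : ℕ) : ℤ))
        = PowerSeries.mk fun j => ((HvecAux.cnt Fs j : ℕ) : ℤ) := by
    intro Fs
    have h : ∀ j, ((gradedHF k (coverIdeal k Fs) j : ℕ) : ℤ)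
        = ((HvecAux.cnt Fs j : ℕ) : ℤ) := fun j => by
      rw [HvecAux.gradedHF_coverIdeal]
    exact congrArg PowerSeries.mk (funext h)
  have hser : (PowerSeries.mk fun j => ((HvecAux.cnt (facets Indep) j : ℕ) : ℤ))
      = PowerSeries.X * (PowerSeries.mk fun j =>
          ((HvecAux.cnt (facets fun F => v ∉ F ∧ Indep F) j : ℕ) : ℤ))
        + (1 - PowerSeries.X) * (PowerSeries.mk fun j =>
          ((HvecAux.cnt (facets fun F => v ∉ F ∧ Indep (insert v F)) j : ℕ) : ℤ)) := by
    apply PowerSeries.ext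
    intro n
    rw [map_add, sub_mul, one_mul, map_sub]
    cases n with
    | zero =>
      rw [PowerSeries.coeff_zero_X_mul, PowerSeries.coeff_zero_X_mul]
      simp only [PowerSeries.coeff_mk, PowerSeries.coeff_zero_eq_constantCoeff]
      rw [count0]
      push_cast
      ring
    | succ n =>
      rw [PowerSeries.coeff_succ_X_mul, PowerSeries.coeff_succ_X_mul]
      simp only [PowerSeries.coeff_mk]
      have h := countS n
      push_cast
      omega
  have hd : Fintype.card V - (r - 1) = (Fintype.card V - r) + 1 := by omega
  simp only [hVec]
  rw [hgr, hgr, hgr, hd, hser]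
  have key : (PowerSeries.X * (PowerSeries.mk fun j =>
          ((HvecAux.cnt (facets fun F => v ∉ F ∧ Indep F) j : ℕ) : ℤ))
        + (1 - PowerSeries.X) * (PowerSeries.mk fun j =>
          ((HvecAux.cnt (facets fun F => v ∉ F ∧ Indep (insert v F)) j : ℕ) : ℤ)))
        * (1 - PowerSeries.X) ^ (Fintype.card V - r)
      = PowerSeries.X * ((PowerSeries.mk fun j =>
          ((HvecAux.cnt (facets fun F => v ∉ F ∧ Indep F) j : ℕ) : ℤ))
            * (1 - PowerSeries.X) ^ (Fintype.card V - r))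
        + (PowerSeries.mk fun j =>
          ((HvecAux.cnt (facets fun F => v ∉ F ∧ Indep (insert v F)) j : ℕ) : ℤ))
            * (1 - PowerSeries.X) ^ ((Fintype.card V - r) + 1) := by
    ring
  rw [key, map_add]
  congr 1
  cases i with
  | zero =>
    rw [if_pos rfl, PowerSeries.coeff_zero_X_mul]
  | succ n =>
    rw [if_neg (Nat.succ_ne_zero n), PowerSeries.coeff_succ_X_mul]
    simp
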